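/- Let ℓ ∈ ℕ, let x_1, x_2, … ∈ ℝ^ℓ be a sequence that is nonzero for infinitely many indices, and let y_1, y_2, … ∈ ℝ^ℓ be a sequence such that every ℓ consecutive vectors y_{t+1}, …, y_{t+ℓ} are linearly independent. Then there exist an infinite set S ⊆ ℕ and a sequence of real numbers {B(m)}_{m≥1} such that: (1) for every m, lim_{n→∞, n∈S} (1/‖x_n‖)·|⟨x_n, y_m⟩ − ‖x_n‖·B(m)| = 0; (2) B(m) ≠ 0 for infinitely many m; and (3) |B(m)| ≤ ‖y_m‖ for every m. -/
import Mathlib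


open Filter Topology
open scoped RealInnerProductSpace

lemma map_atTop_eq_inf (f : ℕ → ℕ) (hf : StrictMono f) :
    atTop ⊓ Filter.principal (Set.range f) = Filter.map f atTop := by
  apply le_antisymm
  · intro u hu
    rw [Filter.mem_map, Filter.mem_atTop_sets] at hu
    obtain ⟨K, hK⟩ := hu
    apply Filter.mem_of_superset
      (Filter.inter_mem_inf (Filter.mem_atTop (f K)) (Filter.mem_principal_self _))
    rintro n ⟨h1, k, rfl⟩
    exact hK k (hf.le_iff_le.mp h1)
  · refine le_inf hf.tendsto_atTop (Filter.le_principal_iff.mpr ?_)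
    rw [Filter.mem_map]
    filter_upwards [Filter.mem_atTop 0] with k _ using ⟨k, rfl⟩

/-- **Lemma 15 (a dominant-term lemma from linear algebra).**  Let `x, y : ℕ → ℝ^ℓ` be
sequences of vectors such that `x n ≠ 0` for infinitely many `n` and every `ℓ` consecutive
vectors `y (t+1), …, y (t+ℓ)` are linearly independent.  Then there are an infinite set
`S ⊆ ℕ` and reals `B m` such that
(1) for every `m`, `(1/‖x n‖)·|⟨x n, y m⟩ - ‖x n‖·B m| → 0` as `n → ∞` along `S`;
(2) `B m ≠ 0` for infinitely many `m`; and (3) `|B m| ≤ ‖y m‖` for every `m`. -/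
theorem dominant_term_lemma
    (ℓ : ℕ) (x y : ℕ → EuclideanSpace ℝ (Fin ℓ))
    (hx : {n : ℕ | x n ≠ 0}.Infinite)
    (hy : ∀ t : ℕ, LinearIndependent ℝ (fun i : Fin ℓ => y (t + 1 + (i : ℕ)))) :
    ∃ S : Set ℕ, S.Infinite ∧ ∃ B : ℕ → ℝ,
      (∀ m : ℕ, Tendsto (fun n => (1 / ‖x n‖) * |⟪x n, y m⟫ - ‖x n‖ * B m|)
        (atTop ⊓ Filter.principal S) (𝓝 0)) ∧
      {m : ℕ | B m ≠ 0}.Infinite ∧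
      (∀ m : ℕ, |B m| ≤ ‖y m‖) := by
  classical
  set p : ℕ → Prop := fun n => x n ≠ 0 with hp
  have hxp : {n | p n}.Infinite := hx
  set e : ℕ → ℕ := Nat.nth p with he
  have he_mono : StrictMono e := Nat.nth_strictMono hxp
  have he_mem : ∀ k, x (e k) ≠ 0 := fun k => Nat.nth_mem_of_infinite hxp k
  -- unit vectors
  set u : ℕ → EuclideanSpace ℝ (Fin ℓ) := fun k => (‖x (e k)‖)⁻¹ • x (e k) with hu
  have hnorm : ∀ k, u k ∈ Metric.sphere (0 : EuclideanSpace ℝ (Fin ℓ)) 1 := by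
    intro k
    simp only [Metric.mem_sphere, dist_zero_right, hu, norm_smul, norm_inv, norm_norm]
    rw [inv_mul_cancel₀ (norm_ne_zero_iff.mpr (he_mem k))]
  obtain ⟨a, ha, φ, hφ, hconv⟩ :=
    (isCompact_sphere (0 : EuclideanSpace ℝ (Fin ℓ)) 1).tendsto_subseq hnorm
  have ha1 : ‖a‖ = 1 := by simpa using ha
  set f : ℕ → ℕ := e ∘ φ with hfdef
  have hf : StrictMono f := he_mono.comp hφ
  refine ⟨Set.range f, Set.infinite_range_of_injective hf.injective, fun m => ⟪a, y m⟫,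
    ?_, ?_, ?_⟩
  · intro m
    rw [map_atTop_eq_inf f hf, Filter.tendsto_map'_iff]
    have hpos : ∀ k, (0:ℝ) < ‖x (f k)‖ := fun k => norm_pos_iff.mpr (he_mem (φ k))
    have heq : (fun k => (1 / ‖x (f k)‖) * |⟪x (f k), y m⟫ - ‖x (f k)‖ * ⟪a, y m⟫|)
        = fun k => |⟪(u ∘ φ) k, y m⟫ - ⟪a, y m⟫| := by
      funext k
      have h0 : ‖x (f k)‖ ≠ 0 := (hpos k).ne'
      rw [Function.comp_apply, hu]
      show (1 / ‖x (f k)‖) * _ = _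
      rw [real_inner_smul_left, one_div,
        ← abs_of_pos (show (0:ℝ) < (‖x (f k)‖)⁻¹ by positivity), ← abs_mul]
      congr 1
      show _ = ‖x (f k)‖⁻¹ * _ - _
      field_simp
      rfl
    rw [show (fun n => (1 / ‖x n‖) * |⟪x n, y m⟫ - ‖x n‖ * ⟪a, y m⟫|) ∘ f
        = fun k => (1 / ‖x (f k)‖) * |⟪x (f k), y m⟫ - ‖x (f k)‖ * ⟪a, y m⟫| from rfl, heq]
    have : Tendsto (fun k => ⟪(u ∘ φ) k, y m⟫) atTop (𝓝 ⟪a, y m⟫) :=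
      hconv.inner tendsto_const_nhds
    have := (this.sub_const ⟪a, y m⟫).abs
    simpa using this
  · apply Set.infinite_of_forall_exists_gt
    intro t
    by_contra hcon
    push_neg at hcon
    have hall : ∀ i : Fin ℓ, ⟪a, y (t + 1 + (i:ℕ))⟫ = 0 := by
      intro i
      by_contra h
      have := hcon _ h
      omega
    have hspan : Submodule.span ℝ (Set.range (fun i : Fin ℓ => y (t + 1 + (i:ℕ)))) = ⊤ := by
      apply (hy t).span_eq_top_of_card_eq_finrank'
      simp [finrank_euclideanSpace_fin]
    have haz : a = 0 := by
      have hz : ∀ v ∈ Submodule.span ℝ (Set.range (fun i : Fin ℓ => y (t + 1 + (i:ℕ)))),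
          ⟪a, v⟫ = 0 := by
        intro v hv
        induction hv using Submodule.span_induction with
        | mem w hw => obtain ⟨i, rfl⟩ := hw; exact hall i
        | zero => simp
        | add v w _ _ hv hw => rw [inner_add_right, hv, hw]; ring
        | smul c v _ hv => rw [real_inner_smul_right, hv]; ring
      have : ⟪a, a⟫ = 0 := hz a (by rw [hspan]; trivial)
      exact inner_self_eq_zero.mp this
    rw [haz] at ha1
    simp at ha1
  · intro m
    calc |⟪a, y m⟫| ≤ ‖a‖ * ‖y m‖ := abs_real_inner_le_norm a (y m)
      _ = ‖y m‖ := by rw [ha1, one_mul]
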